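/- arXiv:2505.10964 — 2 statements merged into one kernel-verified Lean document; each statement's English description precedes it below -/
import Mathlib

section
/- Let R > 0 and consider the density ρ(z) = 2R/(|z|(2R − |z|)) of the m-metric on the region {z ∈ ℂ : 0 < |z| < R/2} of the punctured disk 𝔻_R^* = {z : 0 < |z| < R}. Then at every point z of this region, Δ(log ρ)(z) = 2R/(|z|(2R − |z|)²), and hence the Gaussian curvature K(z) = −Δ(log ρ)(z)/ρ(z)² equals −|z|/(2R), which lies in the interval (−1/4, 0). -/
open Metric Set Filter Topology

/-- The Laplacian `Δf = ∂²f/∂x² + ∂²f/∂y²` of a function `f : ℂ → ℝ`, identifying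
`ℂ` with `ℝ²`: the sum of the second derivatives of `f` along the horizontal line
`t ↦ z + t` and the vertical line `t ↦ z + t·i` through `z`. -/
noncomputable def laplacian (f : ℂ → ℝ) (z : ℂ) : ℝ :=
  deriv (deriv (fun t : ℝ => f (z + t))) 0 +
    deriv (deriv (fun t : ℝ => f (z + t * Complex.I))) 0


private lemma sqrt_hasDeriv (a b t : ℝ) (h : 0 < (a+t)^2+b^2) :
    HasDerivAt (fun u : ℝ => Real.sqrt ((a+u)^2+b^2))
      ((a+t) / Real.sqrt ((a+t)^2+b^2)) t := by
  have hn : HasDerivAt (fun u : ℝ => (a+u)^2+b^2) (2*(a+t)) t := by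
    have h1 : HasDerivAt (fun u : ℝ => a+u) 1 t := (hasDerivAt_id t).const_add a
    have := (h1.pow 2).add_const (b^2)
    simpa [mul_comm] using this
  have hcomp := (Real.hasDerivAt_sqrt h.ne').comp t hn
  refine hcomp.congr_deriv ?_
  have hs : Real.sqrt ((a+t)^2+b^2) ≠ 0 := (Real.sqrt_pos.mpr h).ne'
  field_simp

private lemma line_hasDeriv (R a b t : ℝ) (h0 : 0 < (a+t)^2+b^2)
    (h2 : Real.sqrt ((a+t)^2+b^2) < 2*R) :
    HasDerivAt (fun u : ℝ => Real.log (2*R) - Real.log (Real.sqrt ((a+u)^2+b^2))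
        - Real.log (2*R - Real.sqrt ((a+u)^2+b^2)))
      (-(a+t)/((a+t)^2+b^2)
        + (a+t)/(Real.sqrt ((a+t)^2+b^2) * (2*R - Real.sqrt ((a+t)^2+b^2)))) t := by
  have hspos : 0 < Real.sqrt ((a+t)^2+b^2) := Real.sqrt_pos.mpr h0
  have hsq : Real.sqrt ((a+t)^2+b^2) ^ 2 = (a+t)^2+b^2 := Real.sq_sqrt h0.le
  have hds := sqrt_hasDeriv a b t h0
  have h1 : HasDerivAt (fun u => Real.log (Real.sqrt ((a+u)^2+b^2)))
      (((a+t)/Real.sqrt ((a+t)^2+b^2)) / Real.sqrt ((a+t)^2+b^2)) t := by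
    have := (Real.hasDerivAt_log hspos.ne').comp t hds
    simpa [div_eq_mul_inv, mul_comm, Function.comp_def] using this
  have h2' : HasDerivAt (fun u => Real.log (2*R - Real.sqrt ((a+u)^2+b^2)))
      ((-((a+t)/Real.sqrt ((a+t)^2+b^2)))/(2*R - Real.sqrt ((a+t)^2+b^2))) t := by
    have hsub : HasDerivAt (fun u => 2*R - Real.sqrt ((a+u)^2+b^2))
        (-((a+t)/Real.sqrt ((a+t)^2+b^2))) t := hds.const_sub (2*R)
    have hne : 2*R - Real.sqrt ((a+t)^2+b^2) ≠ 0 := by linarith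
    have := (Real.hasDerivAt_log hne).comp t hsub
    simpa [div_eq_mul_inv, mul_comm, Function.comp_def] using this
  have hall := ((hasDerivAt_const t (Real.log (2*R))).sub h1).sub h2'
  refine hall.congr_deriv ?_
  have h2Rs : 2*R - Real.sqrt ((a+t)^2+b^2) ≠ 0 := by linarith
  have hs : Real.sqrt ((a+t)^2+b^2) ≠ 0 := hspos.ne'
  rw [show -(a+t)/((a+t)^2+b^2) = -(a+t)/(Real.sqrt ((a+t)^2+b^2))^2 by rw [hsq]]
  field_simp
  ring

private lemma line_second (R a b r : ℝ) (hR : 0 < R) (hr : 0 < r)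
    (hr2 : r^2 = a^2+b^2) (hlt : r < 2*R) :
    deriv (deriv (fun t : ℝ => Real.log (2*R) - Real.log (Real.sqrt ((a+t)^2+b^2))
        - Real.log (2*R - Real.sqrt ((a+t)^2+b^2)))) 0
    = (2*a^2 - r^2)/r^4 + (r^2*(2*R-r) - a^2*(2*R-2*r))/(r^3*(2*R-r)^2) := by
  have hs0 : Real.sqrt ((a+0)^2+b^2) = r := by
    rw [add_zero, ← hr2, Real.sqrt_sq hr.le]
  have h00 : 0 < (a+0)^2+b^2 := by rw [add_zero, ← hr2]; positivity
  -- eventual conditions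
  have hc : Continuous fun t : ℝ => (a+t)^2+b^2 := by continuity
  have he1 : ∀ᶠ t in 𝓝 (0:ℝ), 0 < (a+t)^2+b^2 :=
    hc.continuousAt.eventually (eventually_gt_nhds h00)
  have he2 : ∀ᶠ t in 𝓝 (0:ℝ), Real.sqrt ((a+t)^2+b^2) < 2*R := by
    have hcs : Continuous fun t : ℝ => Real.sqrt ((a+t)^2+b^2) :=
      Real.continuous_sqrt.comp hc
    have : Real.sqrt ((a+0)^2+b^2) < 2*R := by rw [hs0]; linarith
    exact hcs.continuousAt.eventually (eventually_lt_nhds this)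
  have hev : deriv (fun t : ℝ => Real.log (2*R) - Real.log (Real.sqrt ((a+t)^2+b^2))
        - Real.log (2*R - Real.sqrt ((a+t)^2+b^2)))
      =ᶠ[𝓝 (0:ℝ)] fun t => -(a+t)/((a+t)^2+b^2)
        + (a+t)/(Real.sqrt ((a+t)^2+b^2) * (2*R - Real.sqrt ((a+t)^2+b^2))) := by
    filter_upwards [he1, he2] with t h1 h2
    exact (line_hasDeriv R a b t h1 h2).deriv
  rw [hev.deriv_eq]
  -- now compute deriv of φ at 0
  have hrne : r ≠ 0 := hr.ne'
  have h2Rr : (0:ℝ) < 2*R - r := by linarith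
  have hn0 : ((a+0)^2+b^2) ≠ 0 := h00.ne'
  have hnum1 : HasDerivAt (fun t : ℝ => -(a+t)) (-1) 0 := by
    exact ((hasDerivAt_id (0:ℝ)).const_add a).neg
  have hden1 : HasDerivAt (fun t : ℝ => (a+t)^2+b^2) (2*(a+0)) 0 := by
    have h1 : HasDerivAt (fun u : ℝ => a+u) 1 0 := (hasDerivAt_id 0).const_add a
    have := (h1.pow 2).add_const (b^2)
    simpa [mul_comm] using this
  have hT1 : HasDerivAt (fun t : ℝ => -(a+t)/((a+t)^2+b^2))
      ((-1 * ((a+0)^2+b^2) - (-(a+0)) * (2*(a+0))) / ((a+0)^2+b^2)^2) 0 :=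
    hnum1.div hden1 hn0
  have hnum2 : HasDerivAt (fun t : ℝ => a+t) 1 0 := (hasDerivAt_id 0).const_add a
  have hds : HasDerivAt (fun t : ℝ => Real.sqrt ((a+t)^2+b^2)) ((a+0)/r) 0 := by
    have := sqrt_hasDeriv a b 0 h00
    rwa [hs0] at this
  have hden2 : HasDerivAt (fun t : ℝ => Real.sqrt ((a+t)^2+b^2) * (2*R - Real.sqrt ((a+t)^2+b^2)))
      ((a+0)/r * (2*R - r) + r * (-((a+0)/r))) 0 := by
    have := hds.mul (hds.const_sub (2*R))
    rwa [hs0] at this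
  have hD0 : Real.sqrt ((a+0)^2+b^2) * (2*R - Real.sqrt ((a+0)^2+b^2)) ≠ 0 := by
    rw [hs0]; positivity
  have hT2 := hnum2.div hden2 hD0
  have := (hT1.add hT2).deriv
  erw [this, hs0]
  rw [add_zero] at *
  have hab : a^2 + b^2 = r^2 := hr2.symm
  rw [hab]
  field_simp
  ring

private lemma norm_sqrt (w : ℂ) : ‖w‖ = Real.sqrt (w.re^2 + w.im^2) := by
  rw [Complex.norm_def, Complex.normSq_apply]
  ring_nf

private lemma log_rho_eq (R : ℝ) (ρ : ℂ → ℝ)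
    (hρ : ∀ w : ℂ, ρ w = 2 * R / (‖w‖ * (2 * R - ‖w‖)))
    (w : ℂ) (h1 : 0 < ‖w‖) (h2 : ‖w‖ < 2*R) (hR : 0 < R) :
    Real.log (ρ w) = Real.log (2*R) - Real.log ‖w‖ - Real.log (2*R - ‖w‖) := by
  rw [hρ w, Real.log_div (by positivity) (by nlinarith), Real.log_mul h1.ne' (by linarith)]
  ring

/-- Curvature of the m-metric in the punctured disk.
For the density `ρ(z) = 2R/(|z|(2R − |z|))` of the m-metric on the region
`0 < |z| < R/2` of `𝔻_R^*`, one has `Δ(log ρ)(z) = 2R/(|z|(2R − |z|)²)`, so the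
Gaussian curvature `K(z) = −Δ(log ρ)(z)/ρ(z)²` equals `−|z|/(2R) ∈ (−1/4, 0)`. -/
theorem curvature_puncturedDisk (R : ℝ) (hR : 0 < R)
    (ρ : ℂ → ℝ) (hρ : ∀ w : ℂ, ρ w = 2 * R / (‖w‖ * (2 * R - ‖w‖)))
    (z : ℂ) (hz₁ : 0 < ‖z‖) (hz₂ : ‖z‖ < R / 2) :
    laplacian (fun w => Real.log (ρ w)) z = 2 * R / (‖z‖ * (2 * R - ‖z‖) ^ 2) ∧
    -(laplacian (fun w => Real.log (ρ w)) z) / (ρ z) ^ 2 = -(‖z‖ / (2 * R)) ∧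
    -(‖z‖ / (2 * R)) ∈ Set.Ioo (-(1 / 4) : ℝ) 0 := by
  set x := z.re with hx
  set y := z.im with hy
  set r := ‖z‖ with hrdef
  have hr2 : r^2 = x^2 + y^2 := by
    rw [hrdef, norm_sqrt z, Real.sq_sqrt (by positivity)]
  have hrlt : r < 2*R := by linarith
  have h2Rr : (0:ℝ) < 2*R - r := by linarith
  -- horizontal line
  have hnormH : ∀ t : ℝ, ‖z + (t:ℂ)‖ = Real.sqrt ((x+t)^2 + y^2) := by
    intro t
    rw [norm_sqrt]
    simp [hx, hy]
  have hnormV : ∀ t : ℝ, ‖z + (t:ℂ) * Complex.I‖ = Real.sqrt ((y+t)^2 + x^2) := by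
    intro t
    rw [norm_sqrt]
    simp only [Complex.add_re, Complex.add_im, Complex.mul_re, Complex.mul_im,
      Complex.I_re, Complex.I_im, Complex.ofReal_re, Complex.ofReal_im]
    ring_nf
    rw [← hx, ← hy]
    ring_nf
  have key : ∀ (a b : ℝ) (g : ℝ → ℂ), (∀ t : ℝ, ‖g t‖ = Real.sqrt ((a+t)^2 + b^2)) →
      r^2 = a^2 + b^2 →
      deriv (deriv (fun t : ℝ => Real.log (ρ (g t)))) 0
      = (2*a^2 - r^2)/r^4 + (r^2*(2*R-r) - a^2*(2*R-2*r))/(r^3*(2*R-r)^2) := by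
    intro a b g hg hab
    have h00 : 0 < (a+0)^2+b^2 := by
      rw [add_zero, ← hab]; positivity
    have hc : Continuous fun t : ℝ => (a+t)^2+b^2 := by continuity
    have he1 : ∀ᶠ t in 𝓝 (0:ℝ), 0 < (a+t)^2+b^2 :=
      hc.continuousAt.eventually (eventually_gt_nhds h00)
    have hs0 : Real.sqrt ((a+0)^2+b^2) = r := by
      rw [add_zero, ← hab, Real.sqrt_sq hz₁.le]
    have he2 : ∀ᶠ t in 𝓝 (0:ℝ), Real.sqrt ((a+t)^2+b^2) < 2*R := by
      have hcs : Continuous fun t : ℝ => Real.sqrt ((a+t)^2+b^2) :=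
        Real.continuous_sqrt.comp hc
      have : Real.sqrt ((a+0)^2+b^2) < 2*R := by rw [hs0]; linarith
      exact hcs.continuousAt.eventually (eventually_lt_nhds this)
    have hev : (fun t : ℝ => Real.log (ρ (g t))) =ᶠ[𝓝 (0:ℝ)]
        fun t => Real.log (2*R) - Real.log (Real.sqrt ((a+t)^2+b^2))
          - Real.log (2*R - Real.sqrt ((a+t)^2+b^2)) := by
      filter_upwards [he1, he2] with t h1 h2
      have hn : ‖g t‖ = Real.sqrt ((a+t)^2+b^2) := hg t
      rw [log_rho_eq R ρ hρ (g t) (by rw [hn]; exact Real.sqrt_pos.mpr h1)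
        (by rw [hn]; exact h2) hR, hn]
    rw [(hev.deriv).deriv_eq]
    exact line_second R a b r hR hz₁ hab hrlt
  have hH := key x y (fun t => z + (t:ℂ)) hnormH hr2
  have hV := key y x (fun t => z + (t:ℂ) * Complex.I) hnormV (by rw [hr2]; ring)
  have hlap : laplacian (fun w => Real.log (ρ w)) z = 2 * R / (r * (2 * R - r) ^ 2) := by
    show deriv (deriv (fun t : ℝ => Real.log (ρ (z + (t:ℂ))))) 0
      + deriv (deriv (fun t : ℝ => Real.log (ρ (z + (t:ℂ) * Complex.I)))) 0 = _
    rw [hH, hV]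
    have hrne : r ≠ 0 := hz₁.ne'
    have hx2 : x^2 = r^2 - y^2 := by linarith
    rw [hx2]
    field_simp
    ring
  refine ⟨hlap, ?_, ?_⟩
  · rw [hlap, hρ z, ← hrdef]
    have hrne : r ≠ 0 := hz₁.ne'
    field_simp
  · constructor
    · have : r/(2*R) < 1/4 := by
        rw [div_lt_div_iff₀ (by linarith) (by norm_num)]
        linarith
      linarith
    · have : 0 < r/(2*R) := by positivity
      linarith
end

section
/- Let R > 1 and consider the density ρ(z) = 2R³/((R|z| − 1)(2R² − R|z| + 1)) of the m-metric on the region {z ∈ ℂ : 1/R < |z| < (1 + R²)/(2R)} of the annulus A_R = {z : 1/R < |z| < R}. Then at every point z of this region the Gaussian curvature K(z) = −Δ(log ρ)(z)/ρ(z)² equals −(1/(2R⁵|z|))·[R⁴(2 + |z|²) − 4R³|z| + R²(3 + |z|²) − 2R|z| + 1]. -/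
open Metric Set

open Filter Topology in

set_option maxHeartbeats 1000000 in
/-- Second derivative along a line of `log ρ` where `ρ` is the radial m-density. -/
lemma key_second_deriv (R a b : ℝ) (hR : 1 < R)
    (hr1 : 1/R < Real.sqrt (a^2+b^2)) (hr2 : Real.sqrt (a^2+b^2) < (1+R^2)/(2*R)) :
    deriv (deriv (fun t : ℝ => Real.log (2*R^3 /
      ((R * Real.sqrt ((a+t)^2+b^2) - 1) *
        (2*R^2 - R * Real.sqrt ((a+t)^2+b^2) + 1))))) 0
    = (b^2 / (Real.sqrt (a^2+b^2))^3) *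
        (R/(2*R^2 - R*Real.sqrt (a^2+b^2)+1) - R/(R*Real.sqrt (a^2+b^2)-1))
      + (a^2/(Real.sqrt (a^2+b^2))^2) *
        (R^2/(R*Real.sqrt (a^2+b^2)-1)^2 + R^2/(2*R^2-R*Real.sqrt (a^2+b^2)+1)^2) := by
  have hR0 : (0:ℝ) < R := by linarith
  set s : ℝ → ℝ := fun t => Real.sqrt ((a+t)^2+b^2) with hs_def
  set r : ℝ := Real.sqrt (a^2+b^2) with hr_def
  have hs0 : s 0 = r := by simp [hs_def, hr_def]
  have hr0 : 0 < r := lt_trans (by positivity) hr1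
  have hrsq : r^2 = a^2 + b^2 := Real.sq_sqrt (by positivity)
  -- the good open set
  set U : Set ℝ := s ⁻¹' (Set.Ioo (1/R) ((1+R^2)/(2*R))) with hU_def
  have hscont : Continuous s := by
    apply Real.continuous_sqrt.comp; continuity
  have hUopen : IsOpen U := isOpen_Ioo.preimage hscont
  have h0U : (0:ℝ) ∈ U := by
    simp only [hU_def, Set.mem_preimage, Set.mem_Ioo, hs0]
    exact ⟨hr1, hr2⟩
  -- basic positivity on U
  have hfacts : ∀ t ∈ U, 0 < s t ∧ 0 < R * s t - 1 ∧ 0 < 2*R^2 - R * s t + 1 := by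
    intro t ht
    obtain ⟨h1, h2⟩ := ht
    have hst : 0 < s t := lt_trans (by positivity) h1
    refine ⟨hst, ?_, ?_⟩
    · have := (div_lt_iff₀ hR0).mp h1; nlinarith
    · have := (lt_div_iff₀ (by positivity : (0:ℝ) < 2*R)).mp h2; nlinarith
  -- derivative of s
  have hsderiv : ∀ t ∈ U, HasDerivAt s ((a+t)/s t) t := by
    intro t ht
    obtain ⟨hst, -, -⟩ := hfacts t ht
    have hq : (0:ℝ) < (a+t)^2+b^2 := by
      have := Real.sqrt_pos.mp (hs_def ▸ hst); exact this
    have h1 : HasDerivAt (fun u : ℝ => (a+u)^2+b^2) (2*(a+t)) t := by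
      have h := (((hasDerivAt_id t).const_add a).pow 2).add_const (b^2)
      refine h.congr_deriv ?_
      push_cast
      simp [id]
    have h2 := (Real.hasDerivAt_sqrt hq.ne').comp t h1
    refine h2.congr_deriv ?_
    rw [hs_def]
    field_simp
  -- explicit first derivative
  set D : ℝ → ℝ := fun t => ((a+t)/s t) *
      (R/(2*R^2 - R * s t + 1) - R/(R * s t - 1)) with hD_def
  have horig : ∀ t ∈ U, HasDerivAt
      (fun u : ℝ => Real.log (2*R^3 / ((R * s u - 1) * (2*R^2 - R * s u + 1)))) (D t) t := by
    intro t ht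
    obtain ⟨hst, hA, hB⟩ := hfacts t ht
    have heq : (fun u : ℝ => Real.log (2*R^3 / ((R * s u - 1) * (2*R^2 - R * s u + 1))))
        =ᶠ[𝓝 t] (fun u : ℝ => Real.log (2*R^3) - Real.log (R * s u - 1)
          - Real.log (2*R^2 - R * s u + 1)) := by
      filter_upwards [hUopen.mem_nhds ht] with u hu
      obtain ⟨-, hA', hB'⟩ := hfacts u hu
      rw [Real.log_div (by positivity) (by positivity), Real.log_mul hA'.ne' hB'.ne']
      ring
    have hs' := hsderiv t ht
    have hlogA : HasDerivAt (fun u => Real.log (R * s u - 1))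
        ((R * ((a+t)/s t)) / (R * s t - 1)) t :=
      (((hs'.const_mul R).sub_const 1).log hA.ne')
    have hlogB : HasDerivAt (fun u => Real.log (2*R^2 - R * s u + 1))
        ((-(R * ((a+t)/s t))) / (2*R^2 - R * s t + 1)) t := by
      have h := (((hs'.const_mul R).const_sub (2*R^2)).add_const 1).log hB.ne'
      convert h using 1
    have h := ((hasDerivAt_const t (Real.log (2*R^3))).sub hlogA).sub hlogB
    have h2 : HasDerivAt (fun u : ℝ => Real.log (2*R^3 /
        ((R * s u - 1) * (2*R^2 - R * s u + 1))))
        (0 - R * ((a+t)/s t) / (R * s t - 1) - -(R * ((a+t)/s t)) / (2*R^2 - R * s t + 1)) t :=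
      HasDerivAt.congr_of_eventuallyEq h heq
    convert h2 using 1
    rw [hD_def]
    field_simp
    ring
  -- the function in the statement is the same
  have hfun : (fun t : ℝ => Real.log (2*R^3 /
      ((R * Real.sqrt ((a+t)^2+b^2) - 1) * (2*R^2 - R * Real.sqrt ((a+t)^2+b^2) + 1))))
      = fun u : ℝ => Real.log (2*R^3 / ((R * s u - 1) * (2*R^2 - R * s u + 1))) := rfl
  rw [hfun]
  have hev : deriv (fun u : ℝ => Real.log (2*R^3 /
      ((R * s u - 1) * (2*R^2 - R * s u + 1)))) =ᶠ[𝓝 0] D := by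
    filter_upwards [hUopen.mem_nhds h0U] with u hu
    exact (horig u hu).deriv
  rw [hev.deriv_eq]
  -- now compute deriv D 0
  obtain ⟨-, hA0, hB0⟩ := hfacts 0 h0U
  rw [hs0] at hA0 hB0
  have hs'0 : HasDerivAt s (a/r) 0 := by
    have h := hsderiv 0 h0U
    rw [hs0] at h
    simpa using h
  have hnum : HasDerivAt (fun u : ℝ => a + u) 1 0 := (hasDerivAt_id 0).const_add a
  have hfrac : HasDerivAt (fun u : ℝ => (a+u)/s u)
      ((1 * r - (a+0) * (a/r)) / r^2) 0 := by
    have h := hnum.div hs'0 (by rw [hs0]; exact hr0.ne')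
    rw [hs0] at h
    exact h
  have hGB : HasDerivAt (fun u : ℝ => R/(2*R^2 - R * s u + 1))
      ((0 * (2*R^2 - R*r + 1) - R * (-(R * (a/r)))) / (2*R^2 - R*r+1)^2) 0 := by
    have hB' : HasDerivAt (fun u : ℝ => 2*R^2 - R * s u + 1) (-(R * (a/r))) 0 :=
      ((hs'0.const_mul R).const_sub (2*R^2)).add_const 1
    have h := (hasDerivAt_const 0 R).div hB' (by rw [hs0]; exact hB0.ne')
    rw [hs0] at h
    exact h
  have hGA : HasDerivAt (fun u : ℝ => R/(R * s u - 1))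
      ((0 * (R*r - 1) - R * (R * (a/r))) / (R*r-1)^2) 0 := by
    have hA' : HasDerivAt (fun u : ℝ => R * s u - 1) (R * (a/r)) 0 :=
      (hs'0.const_mul R).sub_const 1
    have h := (hasDerivAt_const 0 R).div hA' (by rw [hs0]; exact hA0.ne')
    rw [hs0] at h
    exact h
  have hD' : HasDerivAt D
      (((1 * r - (a+0) * (a/r)) / r^2) * (R/(2*R^2 - R*r + 1) - R/(R*r - 1))
        + ((a+0)/r) * ((0 * (2*R^2 - R*r + 1) - R * (-(R * (a/r)))) / (2*R^2 - R*r+1)^2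
            - (0 * (R*r - 1) - R * (R * (a/r))) / (R*r-1)^2)) 0 := by
    have h := hfrac.mul (hGB.sub hGA)
    simp only [Pi.sub_apply, hs0] at h
    exact h
  rw [hD'.deriv]
  have hb2 : b^2 = r^2 - a^2 := by rw [hrsq]; ring
  rw [hb2]
  field_simp
  ring

set_option maxHeartbeats 1000000 in
/-- Curvature of the m-metric in the annulus.
For the density `ρ(z) = 2R³/((R|z| − 1)(2R² − R|z| + 1))` of the m-metric on the
region `1/R < |z| < (1 + R²)/(2R)` of the annulus `A_R`, the Gaussian curvature
`K(z) = −Δ(log ρ)(z)/ρ(z)²` equals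
`−(1/(2R⁵|z|))·[R⁴(2 + |z|²) − 4R³|z| + R²(3 + |z|²) − 2R|z| + 1]`. -/
theorem curvature_annulus (R : ℝ) (hR : 1 < R)
    (ρ : ℂ → ℝ)
    (hρ : ∀ w : ℂ, ρ w = 2 * R ^ 3 / ((R * ‖w‖ - 1) * (2 * R ^ 2 - R * ‖w‖ + 1)))
    (z : ℂ) (hz₁ : 1 / R < ‖z‖) (hz₂ : ‖z‖ < (1 + R ^ 2) / (2 * R)) :
    -(laplacian (fun w => Real.log (ρ w)) z) / (ρ z) ^ 2
      = -(1 / (2 * R ^ 5 * ‖z‖)) *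
          (R ^ 4 * (2 + ‖z‖ ^ 2) - 4 * R ^ 3 * ‖z‖ + R ^ 2 * (3 + ‖z‖ ^ 2)
            - 2 * R * ‖z‖ + 1) := by
  have hR0 : (0:ℝ) < R := by linarith
  have hr0 : 0 < ‖z‖ := lt_trans (by positivity) hz₁
  have hA : 0 < R * ‖z‖ - 1 := by
    have := (div_lt_iff₀ hR0).mp hz₁; nlinarith
  have hB : 0 < 2*R^2 - R*‖z‖ + 1 := by
    have := (lt_div_iff₀ (by positivity : (0:ℝ) < 2*R)).mp hz₂; nlinarith
  have hre : Real.sqrt (z.re^2 + z.im^2) = ‖z‖ := by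
    rw [Complex.norm_def, Complex.normSq_apply]
    congr 1; ring
  have him : Real.sqrt (z.im^2 + z.re^2) = ‖z‖ := by rw [← hre]; congr 1; ring
  have h1 : (fun t : ℝ => Real.log (ρ (z + (t:ℂ))))
      = (fun t : ℝ => Real.log (2*R^3 /
        ((R * Real.sqrt ((z.re+t)^2+z.im^2) - 1) *
          (2*R^2 - R * Real.sqrt ((z.re+t)^2+z.im^2) + 1)))) := by
    funext t
    rw [hρ]
    have : ‖z + (t:ℂ)‖ = Real.sqrt ((z.re+t)^2+z.im^2) := by
      rw [Complex.norm_def, Complex.normSq_apply]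
      simp only [Complex.add_re, Complex.add_im, Complex.ofReal_re, Complex.ofReal_im,
        add_zero]
      congr 1; ring
    rw [this]
  have h2 : (fun t : ℝ => Real.log (ρ (z + (t:ℂ) * Complex.I)))
      = (fun t : ℝ => Real.log (2*R^3 /
        ((R * Real.sqrt ((z.im+t)^2+z.re^2) - 1) *
          (2*R^2 - R * Real.sqrt ((z.im+t)^2+z.re^2) + 1)))) := by
    funext t
    rw [hρ]
    have : ‖z + (t:ℂ) * Complex.I‖ = Real.sqrt ((z.im+t)^2+z.re^2) := by
      rw [Complex.norm_def, Complex.normSq_apply]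
      simp only [Complex.add_re, Complex.add_im, Complex.mul_re, Complex.mul_im,
        Complex.I_re, Complex.I_im, Complex.ofReal_re, Complex.ofReal_im]
      congr 1; ring
    rw [this]
  have hk1 := key_second_deriv R z.re z.im hR (by rw [hre]; exact hz₁) (by rw [hre]; exact hz₂)
  have hk2 := key_second_deriv R z.im z.re hR (by rw [him]; exact hz₁) (by rw [him]; exact hz₂)
  rw [hre] at hk1
  rw [him] at hk2
  have hlap : laplacian (fun w => Real.log (ρ w)) z
      = (z.im^2 / ‖z‖^3) * (R/(2*R^2 - R*‖z‖+1) - R/(R*‖z‖-1))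
        + (z.re^2/‖z‖^2) * (R^2/(R*‖z‖-1)^2 + R^2/(2*R^2-R*‖z‖+1)^2)
        + ((z.re^2 / ‖z‖^3) * (R/(2*R^2 - R*‖z‖+1) - R/(R*‖z‖-1))
        + (z.im^2/‖z‖^2) * (R^2/(R*‖z‖-1)^2 + R^2/(2*R^2-R*‖z‖+1)^2)) := by
    simp only [laplacian]
    rw [show (fun t : ℝ => Real.log (ρ (z + (t:ℂ)))) = _ from h1,
        show (fun t : ℝ => Real.log (ρ (z + (t:ℂ) * Complex.I))) = _ from h2, hk1, hk2]
  rw [hlap, hρ z]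
  have hsum : z.re^2 + z.im^2 = ‖z‖^2 := by
    rw [Complex.sq_norm, Complex.normSq_apply]; ring
  have him2 : z.im^2 = ‖z‖^2 - z.re^2 := by linarith
  rw [him2]
  generalize z.re ^ 2 = c
  generalize hgen : ‖z‖ = r at hA hB hr0 ⊢
  have e1 : R * r - 1 ≠ 0 := ne_of_gt hA
  have e2 : 2 * R ^ 2 - R * r + 1 ≠ 0 := ne_of_gt hB
  have e3 : r ≠ 0 := ne_of_gt hr0
  have e1' : r * R - 1 ≠ 0 := by linarith
  have e2' : R * (R * 2 - r) + 1 ≠ 0 := by nlinarith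
  field_simp
  ring
end
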